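/- Two integral bounds used in the intermediate-angle regime (corrected form of the lemma for ε₀/2 ≤ δ ≤ π): for every natural number m there is a constant C, depending only on m, such that for all z ≥ 1 and all δ ∈ [0, π]: (i) for every real μ, |∫_δ^π D^{2m}[σ ↦ e^{z(cos σ − cos δ)}](τ) cos(τμ) dτ| ≤ C z^{2m}; and (ii) for every μ ≥ 0, |∫₀^∞ D^{2m}[σ ↦ e^{-z(cosh σ + cos δ)}](τ) e^{-τμ} dτ| ≤ C z^{2m} e^{-z(cos δ + 1/2)}, where D^{2m}[f](τ) denotes the 2m-th derivative of f at τ. -/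

import Mathlib

open Real MeasureTheory Set

private lemma abs_sinh_le_cosh (x : ℝ) : |Real.sinh x| ≤ Real.cosh x := by
  rw [abs_le, Real.sinh_eq, Real.cosh_eq]
  constructor <;> nlinarith [Real.exp_pos x, Real.exp_pos (-x)]

private lemma cosh_le_exp_self {x : ℝ} (hx : 0 ≤ x) : Real.cosh x ≤ Real.exp x := by
  rw [Real.cosh_eq]
  have := Real.exp_le_exp.2 (neg_le_self hx)
  linarith

private lemma one_add_sq_le_cosh {x : ℝ} (hx : 0 ≤ x) : 1 + x ^ 2 / 2 ≤ Real.cosh x := by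
  have h1 : Real.cosh x = 2 * Real.sinh (x / 2) ^ 2 + 1 := by
    have := Real.cosh_two_mul (x / 2)
    have h2 := Real.cosh_sq (x / 2)
    rw [show 2 * (x / 2) = x by ring] at this
    nlinarith
  have h3 : x / 2 ≤ Real.sinh (x / 2) := Real.self_le_sinh_iff.2 (by linarith)
  nlinarith

private lemma deriv_cos_shift (z a : ℝ) :
    deriv (fun τ : ℝ => z * Real.cos (τ + a)) = fun τ => z * Real.cos (τ + (a + π / 2)) := by
  funext τ
  have h : HasDerivAt (fun τ : ℝ => z * Real.cos (τ + a)) (z * (-Real.sin (τ + a) * 1)) τ :=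
    by have h2 := (Real.hasDerivAt_cos (τ + a)).comp τ ((hasDerivAt_id' τ).add_const a); exact h2.const_mul z
  rw [h.deriv, show τ + (a + π / 2) = (τ + a) + π / 2 by ring, Real.cos_add_pi_div_two]
  ring

private lemma iter_cos (z c : ℝ) (i : ℕ) :
    iteratedDeriv (i + 1) (fun σ : ℝ => z * (Real.cos σ - c)) =
      fun τ => z * Real.cos (τ + (i + 1) * (π / 2)) := by
  induction i with
  | zero =>
    rw [iteratedDeriv_one]
    funext τ
    have h : HasDerivAt (fun σ : ℝ => z * (Real.cos σ - c)) (z * (-Real.sin τ)) τ :=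
      ((Real.hasDerivAt_cos τ).sub_const c).const_mul z
    rw [h.deriv]
    simp [Real.cos_add_pi_div_two]
  | succ j ih =>
    rw [iteratedDeriv_succ, ih, deriv_cos_shift]
    funext τ
    congr 1
    push_cast
    ring

private lemma iter_cosh (z c : ℝ) (i : ℕ) :
    iteratedDeriv (i + 1) (fun σ : ℝ => -z * (Real.cosh σ + c)) =
      fun τ => -z * (if Even i then Real.sinh τ else Real.cosh τ) := by
  induction i with
  | zero =>
    rw [iteratedDeriv_one]
    funext τ
    have h : HasDerivAt (fun σ : ℝ => -z * (Real.cosh σ + c)) (-z * Real.sinh τ) τ :=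
      ((Real.hasDerivAt_cosh τ).add_const c).const_mul (-z)
    simp [h.deriv]
  | succ j ih =>
    rw [iteratedDeriv_succ, ih]
    funext τ
    rcases Nat.even_or_odd j with hj | hj
    · have h : HasDerivAt (fun τ : ℝ => -z * Real.sinh τ) (-z * Real.cosh τ) τ :=
        (Real.hasDerivAt_sinh τ).const_mul (-z)
      simp only [hj, if_true]
      rw [h.deriv]
      simp [Nat.even_add_one, hj]
    · have hjj : ¬ Even j := Nat.not_even_iff_odd.2 hj
      have h : HasDerivAt (fun τ : ℝ => -z * Real.cosh τ) (-z * Real.sinh τ) τ :=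
        (Real.hasDerivAt_cosh τ).const_mul (-z)
      simp only [hjj, if_false]
      rw [h.deriv]
      simp [Nat.even_add_one, hjj]

private lemma boundA {z : ℝ} (hz : 1 ≤ z) (c : ℝ) (n : ℕ) {τ : ℝ} (hτ : Real.cos τ ≤ c) :
    |iteratedDeriv n (fun σ => Real.exp (z * (Real.cos σ - c))) τ| ≤ (n.factorial : ℝ) * z ^ n := by
  have hz0 : (0 : ℝ) < z := lt_of_lt_of_le one_pos hz
  rw [← Real.norm_eq_abs, ← norm_iteratedFDeriv_eq_norm_iteratedDeriv]
  have heq : (fun σ => Real.exp (z * (Real.cos σ - c))) =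
      Real.exp ∘ (fun σ : ℝ => z * (Real.cos σ - c)) := rfl
  rw [heq]
  have h := norm_iteratedFDeriv_comp_le (𝕜 := ℝ) (g := Real.exp)
      (f := fun σ : ℝ => z * (Real.cos σ - c)) (n := n) (N := (⊤ : WithTop ℕ∞))
      Real.contDiff_exp (contDiff_const.mul (Real.contDiff_cos.sub contDiff_const)) le_top τ (C := 1) (D := z)
      (fun i _ => by
        rw [norm_iteratedFDeriv_eq_norm_iteratedDeriv, iteratedDeriv_eq_iterate,
          Real.iter_deriv_exp, Real.norm_eq_abs, abs_of_pos (Real.exp_pos _)]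
        exact Real.exp_le_one_iff.2 (mul_nonpos_of_nonneg_of_nonpos hz0.le (by linarith)))
      (fun i hi1 _ => by
        rw [norm_iteratedFDeriv_eq_norm_iteratedDeriv]
        obtain ⟨j, rfl⟩ : ∃ j, i = j + 1 := ⟨i - 1, by omega⟩
        rw [iter_cos]
        calc ‖z * Real.cos (τ + (↑j + 1) * (π / 2))‖ ≤ z * 1 := by
              rw [Real.norm_eq_abs, abs_mul, abs_of_pos hz0]
              exact mul_le_mul_of_nonneg_left (Real.abs_cos_le_one _) hz0.le
          _ = z := mul_one z
          _ ≤ z ^ (j + 1) := le_self_pow₀ hz (Nat.succ_ne_zero j))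
  calc ‖iteratedFDeriv ℝ n (Real.exp ∘ fun σ => z * (Real.cos σ - c)) τ‖
      ≤ n.factorial * 1 * z ^ n := h
    _ = (n.factorial : ℝ) * z ^ n := by ring

private lemma boundB {z : ℝ} (hz : 1 ≤ z) (c : ℝ) (n : ℕ) {τ : ℝ} (hτ : 0 ≤ τ) :
    |iteratedDeriv n (fun σ => Real.exp (-z * (Real.cosh σ + c))) τ| ≤
      (n.factorial : ℝ) * Real.exp (-z * (Real.cosh τ + c)) * (z * Real.exp τ) ^ n := by
  have hz0 : (0 : ℝ) < z := lt_of_lt_of_le one_pos hz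
  have hD1 : 1 ≤ z * Real.exp τ := one_le_mul_of_one_le_of_one_le hz (Real.one_le_exp hτ)
  rw [← Real.norm_eq_abs, ← norm_iteratedFDeriv_eq_norm_iteratedDeriv]
  have heq : (fun σ => Real.exp (-z * (Real.cosh σ + c))) =
      Real.exp ∘ (fun σ : ℝ => -z * (Real.cosh σ + c)) := rfl
  rw [heq]
  exact norm_iteratedFDeriv_comp_le (𝕜 := ℝ) (g := Real.exp)
      (f := fun σ : ℝ => -z * (Real.cosh σ + c)) (n := n) (N := (⊤ : WithTop ℕ∞))
      Real.contDiff_exp (contDiff_const.mul (Real.contDiff_cosh.add contDiff_const)) le_top τ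
      (C := Real.exp (-z * (Real.cosh τ + c))) (D := z * Real.exp τ)
      (fun i _ => by
        rw [norm_iteratedFDeriv_eq_norm_iteratedDeriv, iteratedDeriv_eq_iterate,
          Real.iter_deriv_exp, Real.norm_eq_abs, abs_of_pos (Real.exp_pos _)])
      (fun i hi1 _ => by
        rw [norm_iteratedFDeriv_eq_norm_iteratedDeriv]
        obtain ⟨j, rfl⟩ : ∃ j, i = j + 1 := ⟨i - 1, by omega⟩
        rw [iter_cosh]
        have hb : |if Even j then Real.sinh τ else Real.cosh τ| ≤ Real.cosh τ := by
          split
          · exact abs_sinh_le_cosh τ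
          · rw [abs_of_pos (Real.cosh_pos τ)]
        calc ‖-z * (if Even j then Real.sinh τ else Real.cosh τ)‖ ≤ z * Real.cosh τ := by
              rw [Real.norm_eq_abs, abs_mul, abs_neg, abs_of_pos hz0]
              exact mul_le_mul_of_nonneg_left hb hz0.le
          _ ≤ z * Real.exp τ :=
              mul_le_mul_of_nonneg_left (cosh_le_exp_self hτ) hz0.le
          _ ≤ (z * Real.exp τ) ^ (j + 1) := le_self_pow₀ hD1 (Nat.succ_ne_zero j))

/-- Two integral bounds used in the intermediate-angle regime: for every `m : ℕ` there is a
constant `C` (depending only on `m`) such that for all `z ≥ 1` and `δ ∈ [0, π]`: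
(i) for every real `μ`,
`|∫_δ^π D^{2m}[σ ↦ e^{z(cos σ − cos δ)}](τ) cos(τμ) dτ| ≤ C z^{2m}`; and
(ii) for every `μ ≥ 0`,
`|∫₀^∞ D^{2m}[σ ↦ e^{-z(cosh σ + cos δ)}](τ) e^{-τμ} dτ| ≤ C z^{2m} e^{-z(cos δ + 1/2)}`. -/
theorem intermediate_angle_integral_bounds (m : ℕ) :
    ∃ C : ℝ, ∀ z : ℝ, 1 ≤ z → ∀ δ ∈ Set.Icc (0 : ℝ) π,
      (∀ μ : ℝ,
        |∫ τ in δ..π,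
            iteratedDeriv (2 * m)
              (fun σ => Real.exp (z * (Real.cos σ - Real.cos δ))) τ * Real.cos (τ * μ)|
          ≤ C * z ^ (2 * m)) ∧
      (∀ μ : ℝ, 0 ≤ μ →
        |∫ τ in Set.Ioi (0 : ℝ),
            iteratedDeriv (2 * m)
              (fun σ => Real.exp (-z * (Real.cosh σ + Real.cos δ))) τ * Real.exp (-τ * μ)|
          ≤ C * z ^ (2 * m) * Real.exp (-z * (Real.cos δ + 1 / 2))) := by
  set n := 2 * m with hn
  set J : ℝ := ∫ x : ℝ, Real.exp (-(1/4) * x ^ 2) with hJ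
  have hJ0 : 0 ≤ J := integral_nonneg fun x => (Real.exp_pos _).le
  have hJint : Integrable (fun x : ℝ => Real.exp (-(1/4) * x ^ 2)) :=
    integrable_exp_neg_mul_sq (by norm_num)
  set C1 : ℝ := (n.factorial : ℝ) * π with hC1
  set C2 : ℝ := (n.factorial : ℝ) * Real.exp ((n : ℝ) ^ 2 - 1/2) * J with hC2
  have hC1nn : 0 ≤ C1 := mul_nonneg (Nat.cast_nonneg _) Real.pi_pos.le
  have hC2nn : 0 ≤ C2 :=
    mul_nonneg (mul_nonneg (Nat.cast_nonneg _) (Real.exp_pos _).le) hJ0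
  refine ⟨C1 + C2, fun z hz δ hδ => ?_⟩
  have hz0 : (0 : ℝ) < z := lt_of_lt_of_le one_pos hz
  have hzn : (0 : ℝ) ≤ z ^ n := (pow_pos hz0 n).le
  obtain ⟨hδ0, hδπ⟩ := hδ
  constructor
  · intro μ
    have key : ∀ x ∈ Set.uIoc δ π,
        ‖iteratedDeriv n (fun σ => Real.exp (z * (Real.cos σ - Real.cos δ))) x *
          Real.cos (x * μ)‖ ≤ (n.factorial : ℝ) * z ^ n := by
      intro x hx
      rw [Set.uIoc_of_le hδπ] at hx
      have hc : Real.cos x ≤ Real.cos δ :=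
        Real.cos_le_cos_of_nonneg_of_le_pi hδ0 hx.2 hx.1.le
      rw [Real.norm_eq_abs, abs_mul]
      calc |iteratedDeriv n (fun σ => Real.exp (z * (Real.cos σ - Real.cos δ))) x| *
            |Real.cos (x * μ)|
          ≤ ((n.factorial : ℝ) * z ^ n) * 1 :=
            mul_le_mul (boundA hz _ n hc) (Real.abs_cos_le_one _) (abs_nonneg _)
              (mul_nonneg (Nat.cast_nonneg _) hzn)
        _ = (n.factorial : ℝ) * z ^ n := mul_one _
    have h1 := intervalIntegral.norm_integral_le_of_norm_le_const key
    rw [Real.norm_eq_abs] at h1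
    have habs : |π - δ| ≤ π := by
      rw [abs_of_nonneg (by linarith)]; linarith
    calc |∫ τ in δ..π, iteratedDeriv n
            (fun σ => Real.exp (z * (Real.cos σ - Real.cos δ))) τ * Real.cos (τ * μ)|
        ≤ (n.factorial : ℝ) * z ^ n * |π - δ| := h1
      _ ≤ (n.factorial : ℝ) * z ^ n * π := by
          exact mul_le_mul_of_nonneg_left habs (mul_nonneg (Nat.cast_nonneg _) hzn)
      _ = C1 * z ^ n := by rw [hC1]; ring
      _ ≤ (C1 + C2) * z ^ n := by nlinarith
  · intro μ hμ
    set K : ℝ := (n.factorial : ℝ) * z ^ n *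
      Real.exp ((n : ℝ) ^ 2 - 1/2 - z * (Real.cos δ + 1/2)) with hK
    have hKnn : 0 ≤ K :=
      mul_nonneg (mul_nonneg (Nat.cast_nonneg _) hzn) (Real.exp_pos _).le
    have hGint : Integrable (fun τ : ℝ => K * Real.exp (-(1/4) * τ ^ 2))
        (volume.restrict (Set.Ioi (0:ℝ))) := (hJint.const_mul K).restrict
    have hpt : ∀ τ : ℝ, τ ∈ Set.Ioi (0:ℝ) →
        ‖iteratedDeriv n (fun σ => Real.exp (-z * (Real.cosh σ + Real.cos δ))) τ *
          Real.exp (-τ * μ)‖ ≤ K * Real.exp (-(1/4) * τ ^ 2) := by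
      intro τ hτ
      have hτ0 : (0 : ℝ) ≤ τ := (Set.mem_Ioi.1 hτ).le
      have hB := boundB hz (Real.cos δ) n hτ0
      have hexp1 : Real.exp (-τ * μ) ≤ 1 :=
        Real.exp_le_one_iff.2 (by nlinarith)
      rw [Real.norm_eq_abs, abs_mul, abs_of_pos (Real.exp_pos _)]
      calc |iteratedDeriv n (fun σ => Real.exp (-z * (Real.cosh σ + Real.cos δ))) τ| *
            Real.exp (-τ * μ)
          ≤ ((n.factorial : ℝ) * Real.exp (-z * (Real.cosh τ + Real.cos δ)) *
              (z * Real.exp τ) ^ n) * 1 :=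
            mul_le_mul hB hexp1 (Real.exp_pos _).le
              (mul_nonneg (mul_nonneg (Nat.cast_nonneg _) (Real.exp_pos _).le)
                (pow_nonneg (mul_nonneg hz0.le (Real.exp_pos _).le) n))
        _ = (n.factorial : ℝ) * z ^ n *
              Real.exp (-z * (Real.cosh τ + Real.cos δ) + n * τ) := by
            rw [mul_pow, ← Real.exp_nat_mul, Real.exp_add]; ring
        _ ≤ K * Real.exp (-(1/4) * τ ^ 2) := by
            have hexp : Real.exp (-z * (Real.cosh τ + Real.cos δ) + n * τ) ≤
                Real.exp ((n : ℝ) ^ 2 - 1/2 - z * (Real.cos δ + 1/2)) *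
                  Real.exp (-(1/4) * τ ^ 2) := by
              rw [← Real.exp_add]
              apply Real.exp_le_exp.2
              have hch := one_add_sq_le_cosh hτ0
              have h1 : z * (1 + τ ^ 2 / 2) ≤ z * Real.cosh τ :=
                mul_le_mul_of_nonneg_left hch hz0.le
              nlinarith [sq_nonneg (τ / 2 - (n : ℝ)), mul_nonneg (sub_nonneg.2 hz) (sq_nonneg τ)]
            rw [hK, mul_assoc ((n.factorial : ℝ) * z ^ n)]
            exact mul_le_mul_of_nonneg_left hexp (mul_nonneg (Nat.cast_nonneg _) hzn)
    have hae : (fun τ => ‖iteratedDeriv n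
          (fun σ => Real.exp (-z * (Real.cosh σ + Real.cos δ))) τ * Real.exp (-τ * μ)‖)
        ≤ᵐ[volume.restrict (Set.Ioi (0:ℝ))] fun τ => K * Real.exp (-(1/4) * τ ^ 2) :=
      (ae_restrict_iff' measurableSet_Ioi).2 (Filter.Eventually.of_forall hpt)
    calc |∫ τ in Set.Ioi (0:ℝ), iteratedDeriv n
            (fun σ => Real.exp (-z * (Real.cosh σ + Real.cos δ))) τ * Real.exp (-τ * μ)|
        ≤ ∫ τ in Set.Ioi (0:ℝ), ‖iteratedDeriv n
            (fun σ => Real.exp (-z * (Real.cosh σ + Real.cos δ))) τ * Real.exp (-τ * μ)‖ := by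
          rw [← Real.norm_eq_abs]; exact norm_integral_le_integral_norm _
      _ ≤ ∫ τ in Set.Ioi (0:ℝ), K * Real.exp (-(1/4) * τ ^ 2) :=
          integral_mono_of_nonneg (Filter.Eventually.of_forall fun τ => norm_nonneg _) hGint hae
      _ = K * ∫ τ in Set.Ioi (0:ℝ), Real.exp (-(1/4) * τ ^ 2) := integral_const_mul _ _
      _ ≤ K * J :=
          mul_le_mul_of_nonneg_left
            (setIntegral_le_integral hJint
              (Filter.Eventually.of_forall fun x => (Real.exp_pos _).le)) hKnn
      _ = C2 * z ^ n * Real.exp (-z * (Real.cos δ + 1/2)) := by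
          rw [hK, hC2, show (n : ℝ) ^ 2 - 1/2 - z * (Real.cos δ + 1/2) =
            ((n : ℝ) ^ 2 - 1/2) + (-z * (Real.cos δ + 1/2)) by ring, Real.exp_add]
          ring
      _ ≤ (C1 + C2) * z ^ n * Real.exp (-z * (Real.cos δ + 1/2)) := by
          have h := Real.exp_pos (-z * (Real.cos δ + 1/2))
          nlinarith [mul_nonneg (mul_nonneg hC1nn hzn) h.le]
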